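/- arXiv:2005.06691 — 5 statements merged into one kernel-verified Lean document; each statement's English description precedes it below -/
import Mathlib

section
/- For a permutation Π of [n] with preference relations: if Π is stable (i.e., there is no pair i, j with i ≠ j and i ≠ Π(j), such that i prefers Π(j) to Π(i) and Π(j) prefers i to j), then the inverse permutation Π⁻¹ is also stable. -/
/-- `pref i j k` means agent `i` strictly prefers agent `j` to agent `k`. -/
def IsStablePerm {n : ℕ} (pref : Fin n → Fin n → Fin n → Prop)
    (σ : Equiv.Perm (Fin n)) : Prop :=
  ¬ ∃ i j : Fin n, i ≠ j ∧ i ≠ σ j ∧ pref i (σ j) (σ i) ∧ pref (σ j) i j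

/-- If `σ` is stable then so is its inverse `σ⁻¹`. -/
theorem inverse_of_stable_is_stable {n : ℕ}
    (pref : Fin n → Fin n → Fin n → Prop)
    (hirr : ∀ i j, ¬ pref i j j)
    (hasymm : ∀ i j k, pref i j k → ¬ pref i k j)
    (htrans : ∀ i j k l, pref i j k → pref i k l → pref i j l)
    (htotal : ∀ i j k, j ≠ k → j ≠ i → k ≠ i → pref i j k ∨ pref i k j)
    (σ : Equiv.Perm (Fin n)) (hσ : IsStablePerm pref σ) :
    IsStablePerm pref σ.symm := by
  rintro ⟨i, j, h1, h2, h3, h4⟩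
  exact hσ ⟨σ.symm j, σ.symm i, fun h => h1 (σ.symm.injective h).symm,
    by simpa using fun h => h2 h.symm, by simpa using h4, by simpa using h3⟩
end

section
/- If Π is a stable permutation of [n] and i is a fixed point of Π (i.e., Π(i) = i), then for every j ≠ i, Π(j) prefers j to i; consequently Π has no other fixed point, i.e., a stable permutation has at most one fixed point. -/
/-- If a stable permutation has a fixed point `i`, then every agent `σ j` with
`j ≠ i` prefers `j` to `i`, and `i` is the unique fixed point. -/
theorem fixedPoint_unique_of_stable {n : ℕ}
    (pref : Fin n → Fin n → Fin n → Prop)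
    (hirr : ∀ i j, ¬ pref i j j)
    (hasymm : ∀ i j k, pref i j k → ¬ pref i k j)
    (htrans : ∀ i j k l, pref i j k → pref i k l → pref i j l)
    (htotal : ∀ i j k, j ≠ k → j ≠ i → k ≠ i → pref i j k ∨ pref i k j)
    (hself : ∀ i j, j ≠ i → pref i j i)
    (σ : Equiv.Perm (Fin n)) (hσ : IsStablePerm pref σ)
    (i : Fin n) (hfix : σ i = i) :
    (∀ j, j ≠ i → pref (σ j) j i) ∧ (∀ j, σ j = j → j = i) := by
  have hnf : ∀ j, j ≠ i → σ j ≠ j := by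
    intro j hj hfj
    exact hσ ⟨i, j, fun h => hj h.symm, by rw [hfj]; exact fun h => hj h.symm,
      by rw [hfj, hfix]; exact hself i j hj,
      by rw [hfj]; exact hself j i (Ne.symm hj)⟩
  have key : ∀ j, j ≠ i → pref (σ j) j i := by
    intro j hj
    have hiσj : i ≠ σ j := by
      intro h
      exact hj (σ.injective (by rw [← h, hfix]))
    have hns : ¬ pref (σ j) i j := by
      intro h
      exact hσ ⟨i, j, fun h' => hj h'.symm, hiσj, by rw [hfix]; exact hself i (σ j) hiσj.symm, h⟩
    rcases htotal (σ j) j i hj (Ne.symm (hnf j hj)) hiσj with h | h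
    · exact h
    · exact absurd h hns
  exact ⟨key, fun j hfj => by
    by_contra hj
    exact hnf j hj hfj⟩
end

section
/- Let Π be a stable permutation of [n] and C a cycle of Π of length at least 3. Then exactly one of the following holds: every i ∈ C prefers its successor Π(i) to its predecessor Π⁻¹(i), or every i ∈ C prefers its predecessor Π⁻¹(i) to its successor Π(i). -/
/-- On any cycle of length at least 3 of a stable permutation, either every agent
prefers its successor to its predecessor, or every agent prefers its predecessor
to its successor (exactly one of the two alternatives holds). -/
theorem cycle_orientation_of_stable {n : ℕ}
    (pref : Fin n → Fin n → Fin n → Prop)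
    (hirr : ∀ i j, ¬ pref i j j)
    (hasymm : ∀ i j k, pref i j k → ¬ pref i k j)
    (htrans : ∀ i j k l, pref i j k → pref i k l → pref i j l)
    (htotal : ∀ i j k, j ≠ k → j ≠ i → k ≠ i → pref i j k ∨ pref i k j)
    (σ : Equiv.Perm (Fin n)) (hσ : IsStablePerm pref σ)
    (i₀ : Fin n) (C : Set (Fin n)) (hC : C = {j | σ.SameCycle i₀ j})
    (hcard : 3 ≤ C.ncard) :
    Xor' (∀ i ∈ C, pref i (σ i) (σ.symm i)) (∀ i ∈ C, pref i (σ.symm i) (σ i)) := by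
  subst hC
  -- every element of C has σ i ≠ i
  have hfix : ∀ i, σ.SameCycle i₀ i → σ i ≠ i := by
    intro i hi h
    have hsub : {j | σ.SameCycle i₀ j} ⊆ {i} := by
      intro j hj
      obtain ⟨m, hm⟩ := (hi.symm.trans hj : σ.SameCycle i j)
      have := Equiv.Perm.zpow_apply_eq_self_of_apply_eq_self h m
      simp only [Set.mem_singleton_iff]
      rw [← hm, this]
    have := Set.ncard_le_ncard hsub (Set.finite_singleton i)
    rw [Set.ncard_singleton] at this
    omega
  -- every element of C has σ (σ i) ≠ i
  have hfix2 : ∀ i, σ.SameCycle i₀ i → σ (σ i) ≠ i := by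
    intro i hi h
    have hsub : {j | σ.SameCycle i₀ j} ⊆ {i, σ i} := by
      intro j hj
      obtain ⟨k, -, hk⟩ :=
        Equiv.Perm.SameCycle.exists_pow_eq' (hi.symm.trans hj : σ.SameCycle i j)
      have key : ∀ m : ℕ, (σ ^ m) i = i ∨ (σ ^ m) i = σ i := by
        intro m
        induction m with
        | zero => left; rfl
        | succ m ih =>
          rcases ih with h' | h'
          · right; rw [pow_succ', Equiv.Perm.mul_apply, h']
          · left; rw [pow_succ', Equiv.Perm.mul_apply, h', h]
      rcases key k with h' | h' <;> rw [← hk, h'] <;> simp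
    have hfin : ({i, σ i} : Set (Fin n)).Finite := Set.toFinite _
    have h2 : ({i, σ i} : Set (Fin n)).ncard ≤ 2 := by
      have := Set.ncard_insert_le i ({σ i} : Set (Fin n))
      simp [Set.ncard_singleton] at this
      omega
    have := Set.ncard_le_ncard hsub hfin
    omega
  -- membership of σ.symm i in C
  have hmem_symm : ∀ i, σ.SameCycle i₀ i → σ.SameCycle i₀ (σ.symm i) := by
    intro i hi
    exact hi.trans ⟨-1, by rw [zpow_neg_one]; rfl⟩
  -- key propagation step
  have hstep : ∀ i, σ.SameCycle i₀ i → pref i (σ.symm i) (σ i) →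
      pref (σ.symm i) (σ.symm (σ.symm i)) (σ (σ.symm i)) := by
    intro i hi hp
    set k := σ.symm i with hk
    set j := σ.symm k with hj
    have hki : σ.SameCycle i₀ k := hmem_symm i hi
    have hji : σ.SameCycle i₀ j := hmem_symm k hki
    have hσj : σ j = k := by simp [hj]
    have hσk : σ k = i := by simp [hk]
    have hij : i ≠ j := by
      intro h
      apply hfix2 j hji
      rw [hσj, hσk, ← h]
    have hik : i ≠ k := by
      intro h
      apply hfix k hki
      rw [hσk, h]
    have hjk : j ≠ k := by
      intro h
      apply hfix j hji
      rw [hσj, h]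
    have hnst : ¬ pref (σ j) i j := by
      intro hc
      exact hσ ⟨i, j, hij, by rw [hσj]; exact hik, by rw [hσj]; exact hp, hc⟩
    rw [hσj] at hnst
    have := htotal k i j hij hik hjk
    rcases this with h | h
    · exact absurd h hnst
    · rw [hσk]; exact h
  -- iterate: all backward
  have hiter : ∀ i, σ.SameCycle i₀ i → pref i (σ.symm i) (σ i) →
      ∀ m : ℕ, pref ((σ.symm ^ m) i) (σ.symm ((σ.symm ^ m) i)) (σ ((σ.symm ^ m) i)) ∧
        σ.SameCycle i₀ ((σ.symm ^ m) i) := by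
    intro i hi hp m
    induction m with
    | zero => exact ⟨hp, hi⟩
    | succ m ih =>
      have hrw : (σ.symm ^ (m + 1)) i = σ.symm ((σ.symm ^ m) i) := by
        rw [pow_succ']; rfl
      rw [hrw]
      exact ⟨hstep _ ih.2 ih.1, hmem_symm _ ih.2⟩
  -- one backward implies all backward
  have hall : ∀ i, σ.SameCycle i₀ i → pref i (σ.symm i) (σ i) →
      ∀ j, σ.SameCycle i₀ j → pref j (σ.symm j) (σ j) := by
    intro i hi hp j hj
    have hsc : Equiv.Perm.SameCycle σ⁻¹ i j :=
      (Equiv.Perm.sameCycle_inv).mpr (hi.symm.trans hj)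
    obtain ⟨m, -, hm⟩ := hsc.exists_pow_eq'
    have hm' : (σ.symm ^ m) i = j := hm
    have := (hiter i hi hp m).1
    rwa [hm'] at this
  -- totality on the cycle
  have hdicho : ∀ i, σ.SameCycle i₀ i →
      pref i (σ i) (σ.symm i) ∨ pref i (σ.symm i) (σ i) := by
    intro i hi
    have h1 : σ i ≠ σ.symm i := by
      intro h
      apply hfix2 i hi
      rw [h]; simp
    have h2 : σ i ≠ i := hfix i hi
    have h3 : σ.symm i ≠ i :=
      fun h => hfix i hi ((Equiv.symm_apply_eq σ).mp h).symm
    exact htotal i (σ i) (σ.symm i) h1 h2 h3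
  have hi₀ : σ.SameCycle i₀ i₀ := Equiv.Perm.SameCycle.refl σ i₀
  unfold Xor'
  · by_cases hb : ∀ i ∈ {j | σ.SameCycle i₀ j}, pref i (σ.symm i) (σ i)
    · right
      refine ⟨hb, ?_⟩
      intro hf
      exact hasymm i₀ _ _ (hf i₀ hi₀) (hb i₀ hi₀)
    · left
      push_neg at hb
      obtain ⟨i, hi, hni⟩ := hb
      refine ⟨?_, fun hb' => hni (hb' i hi)⟩
      intro j hj
      rcases hdicho j hj with h | h
      · exact h
      · exact absurd (hall j hj h i hi) hni
end

section
/- In the terminal state of the one-sided proposal algorithm, the set of terminal successors equals the set of terminal predecessors, and this common set has cardinality n−1 or n. -/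
/-- Terminal state of the one-sided proposal algorithm: `P` is the set of agents whose
proposal is currently held (predecessors), `S` is the set of agents holding a proposal
(successors), `R i j` means that `j` has rejected `i`, and `g` sends each predecessor
to the successor holding its proposal.  Then `S = P` and `|P| ∈ {n-1, n}`. -/
theorem terminal_successors_eq_predecessors (n : ℕ)
    (P S : Finset (Fin n)) (R : Fin n → Fin n → Prop) (g : Fin n → Fin n)
    (hinj : Set.InjOn g (P : Set (Fin n)))
    (himg : S = P.image g)
    (hterm : ∀ i : Fin n, i ∉ P → ∀ j : Fin n, j ≠ i → R i j)
    (hheld : ∀ i j : Fin n, R i j → j ∈ S) :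
    S = P ∧ (P.card = n - 1 ∨ P.card = n) := by
  have hcard : S.card = P.card := by
    rw [himg]; exact Finset.card_image_of_injOn hinj
  by_cases hP : P = Finset.univ
  · subst hP
    have hS : S = Finset.univ := by
      apply Finset.eq_univ_of_card
      simpa using hcard
    exact ⟨hS, Or.inr (by simp)⟩
  · obtain ⟨i, hi⟩ : ∃ i, i ∉ P := by
      by_contra h
      push_neg at h
      exact hP (Finset.eq_univ_iff_forall.mpr h)
    have hsubS : Finset.univ.erase i ⊆ S := by
      intro j hj
      exact hheld i j (hterm i hi j (Finset.ne_of_mem_erase hj))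
    have hsubP : P ⊆ Finset.univ.erase i := by
      intro j hj
      exact Finset.mem_erase.mpr ⟨fun h => hi (h ▸ hj), Finset.mem_univ j⟩
    have hce : (Finset.univ.erase i).card = n - 1 := by
      rw [Finset.card_erase_of_mem (Finset.mem_univ i)]
      simp
    have hScard : S.card ≤ (Finset.univ.erase i).card := by
      rw [hcard]; exact Finset.card_le_card hsubP
    have hSe : Finset.univ.erase i = S := Finset.eq_of_subset_of_card_le hsubS hScard
    have hPe : P = Finset.univ.erase i :=
      Finset.eq_of_subset_of_card_le hsubP (by rw [hSe, hcard])
    exact ⟨hSe.symm.trans hPe.symm, Or.inl (hPe ▸ hce)⟩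
end

section
/- Let x_i ∈ [0,1] for i ∈ I and z_j ∈ [0,1] for j ∈ J, where I, J are finite sets, and let Π be a bijection of I. Let the product run over pairs (i, j) ∈ I × J with j ≠ i and j ≠ Π⁻¹(i). Then log ∏ (1 − x_i z_j) ≤ −(∑_{i∈I} x_i)(∑_{j∈J} z_j) + 5. -/
lemma log_one_sub_le_aux (u : ℝ) (h0 : 0 ≤ u) (h1 : u < 1) :
    Real.log (1 - u) ≤ -u - u^2/2 := by
  have hg : ∀ t ∈ Set.Ioo (0:ℝ) u, HasDerivAt (fun t => -t - t^2/2 - Real.log (1-t))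
      (-1 - t + 1/(1-t)) t := by
    intro t ht
    have htlt : t < 1 := lt_of_lt_of_le ht.2 h1.le
    have hne : (1 : ℝ) - t ≠ 0 := by linarith [ht.1]
    have hlog : HasDerivAt (fun t : ℝ => Real.log (1 - t)) (-1 / (1 - t)) t := by
      have := ((hasDerivAt_id t).const_sub 1).log hne
      simpa using this
    have hpoly : HasDerivAt (fun t : ℝ => -t - t^2/2) (-1 - t) t := by
      have h1' : HasDerivAt (fun t : ℝ => -t) (-1) t := (hasDerivAt_id t).neg
      have h2' : HasDerivAt (fun t : ℝ => t^2/2) t t := by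
        have := (hasDerivAt_pow 2 t).div_const 2
        simpa using this
      exact h1'.sub h2'
    have := hpoly.sub hlog
    have e : -1 - t + 1/(1-t) = -1 - t - -1/(1-t) := by ring
    rw [e]
    exact this
  have hmono : MonotoneOn (fun t => -t - t^2/2 - Real.log (1-t)) (Set.Icc 0 u) := by
    apply monotoneOn_of_deriv_nonneg (convex_Icc 0 u)
    · apply ContinuousOn.sub
      · fun_prop
      · apply ContinuousOn.log
        · fun_prop
        · intro t ht
          have := ht.2
          have : t < 1 := lt_of_le_of_lt ht.2 h1
          intro h; linarith [sub_eq_zero.mp h]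
    · rw [interior_Icc]
      intro t ht
      exact ((hg t ht).differentiableAt).differentiableWithinAt
    · rw [interior_Icc]
      intro t ht
      rw [(hg t ht).deriv]
      have h1t : 0 < 1 - t := by linarith [lt_of_lt_of_le ht.2 h1.le]
      have : -1 - t + 1/(1-t) = t^2/(1-t) := by field_simp; ring
      rw [this]
      positivity
  have := hmono (Set.left_mem_Icc.mpr h0) (Set.right_mem_Icc.mpr h0) h0
  simp only at this
  simp at this ⊢
  linarith

/-- For `xᵢ, z_j ∈ [0,1]` (with `xᵢ z_j < 1`), finite index sets `I, J`, and a
permutation `π` mapping `I` into itself, the product over pairs `(i,j) ∈ I × J` with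
`j ≠ i` and `j ≠ π⁻¹(i)` satisfies
`log ∏ (1 - xᵢ z_j) ≤ -(∑_{i∈I} xᵢ)(∑_{j∈J} z_j) + 5`. -/
theorem log_prod_one_sub_le {α : Type*} [DecidableEq α] (I J : Finset α)
    (x z : α → ℝ) (hx : ∀ i ∈ I, x i ∈ Set.Icc (0:ℝ) 1)
    (hz : ∀ j ∈ J, z j ∈ Set.Icc (0:ℝ) 1)
    (hlt : ∀ i ∈ I, ∀ j ∈ J, x i * z j < 1)
    (π : Equiv.Perm α) (hπ : ∀ a ∈ I, π a ∈ I) :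
    Real.log (∏ p ∈ (I ×ˢ J).filter fun p => p.2 ≠ p.1 ∧ p.2 ≠ π.symm p.1,
        (1 - x p.1 * z p.2))
      ≤ -(∑ i ∈ I, x i) * (∑ j ∈ J, z j) + 5 := by
  classical
  set u : α × α → ℝ := fun p => x p.1 * z p.2 with hu
  have hmem : ∀ p ∈ I ×ˢ J, 0 ≤ u p ∧ u p < 1 := by
    intro p hp
    rw [Finset.mem_product] at hp
    exact ⟨mul_nonneg (hx _ hp.1).1 (hz _ hp.2).1, hlt _ hp.1 _ hp.2⟩
  set pred : α × α → Prop := fun p => p.2 ≠ p.1 ∧ p.2 ≠ π.symm p.1 with hpred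
  set s : Finset (α × α) := (I ×ˢ J).filter pred with hsdef
  set t : Finset (α × α) := (I ×ˢ J).filter (fun p => ¬ pred p) with htdef
  have hsub : s ⊆ I ×ˢ J := Finset.filter_subset _ _
  have htsub : t ⊆ I ×ˢ J := Finset.filter_subset _ _
  -- log prod = sum of logs
  have hlogprod : Real.log (∏ p ∈ s, (1 - u p)) = ∑ p ∈ s, Real.log (1 - u p) := by
    apply Real.log_prod
    intro p hp
    have := (hmem p (hsub hp)).2
    intro h; rw [sub_eq_zero] at h; exact absurd h.symm (ne_of_lt this)
  rw [show Real.log (∏ p ∈ s, (1 - x p.1 * z p.2)) = ∑ p ∈ s, Real.log (1 - u p) from hlogprod]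
  have hlog : ∑ p ∈ s, Real.log (1 - u p) ≤ ∑ p ∈ s, (-(u p) - (u p)^2/2) :=
    Finset.sum_le_sum fun p hp =>
      log_one_sub_le_aux _ (hmem p (hsub hp)).1 (hmem p (hsub hp)).2
  refine hlog.trans ?_
  have hexpand : ∑ p ∈ s, (-(u p) - (u p)^2/2)
      = -(∑ p ∈ s, u p) - (∑ p ∈ s, (u p)^2)/2 := by
    rw [Finset.sum_sub_distrib, Finset.sum_neg_distrib, Finset.sum_div]
  rw [hexpand]
  -- full sums
  have hA : ∑ p ∈ I ×ˢ J, u p = (∑ i ∈ I, x i) * (∑ j ∈ J, z j) := by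
    rw [Finset.sum_mul_sum, Finset.sum_product]
  have hB : ∑ p ∈ I ×ˢ J, (u p)^2 = (∑ i ∈ I, (x i)^2) * (∑ j ∈ J, (z j)^2) := by
    rw [Finset.sum_mul_sum, Finset.sum_product]
    simp [hu, mul_pow]
  set B : ℝ := (∑ i ∈ I, (x i)^2) * (∑ j ∈ J, (z j)^2) with hBdef
  have hBnonneg : 0 ≤ B := by
    apply mul_nonneg <;> exact Finset.sum_nonneg fun i _ => sq_nonneg _
  -- splitting
  have hsplit1 : ∑ p ∈ s, u p + ∑ p ∈ t, u p = ∑ p ∈ I ×ˢ J, u p :=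
    Finset.sum_filter_add_sum_filter_not _ _ _
  have hsplit2 : ∑ p ∈ s, (u p)^2 + ∑ p ∈ t, (u p)^2 = ∑ p ∈ I ×ˢ J, (u p)^2 :=
    Finset.sum_filter_add_sum_filter_not _ _ _
  set R : ℝ := ∑ p ∈ t, u p with hRdef
  set R' : ℝ := ∑ p ∈ t, (u p)^2 with hR'def
  have hR'leR : R' ≤ R := by
    apply Finset.sum_le_sum
    intro p hp
    obtain ⟨h0, h1⟩ := hmem p (htsub hp)
    nlinarith
  have hR'nonneg : 0 ≤ R' := Finset.sum_nonneg fun p _ => sq_nonneg _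
  -- bound R by diagonal sums
  set t1 : Finset (α × α) := (I ×ˢ J).filter (fun p => p.2 = p.1) with ht1
  set t2 : Finset (α × α) := (I ×ˢ J).filter (fun p => p.2 = π.symm p.1) with ht2
  have htsub12 : t ⊆ t1 ∪ t2 := by
    intro p hp
    rw [htdef, Finset.mem_filter] at hp
    rw [Finset.mem_union, ht1, ht2, Finset.mem_filter, Finset.mem_filter]
    simp only [hpred, not_and_or, not_not, ne_eq] at hp
    rcases hp.2 with h | h
    · exact Or.inl ⟨hp.1, h⟩
    · exact Or.inr ⟨hp.1, h⟩
  have hRle12 : R ≤ ∑ p ∈ t1, u p + ∑ p ∈ t2, u p := by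
    have h1 : R ≤ ∑ p ∈ t1 ∪ t2, u p := by
      apply Finset.sum_le_sum_of_subset_of_nonneg htsub12
      intro p hp _
      rcases Finset.mem_union.mp hp with h | h
      · exact (hmem p (Finset.filter_subset _ _ h)).1
      · exact (hmem p (Finset.filter_subset _ _ h)).1
    have h2 : ∑ p ∈ t1 ∪ t2, u p + ∑ p ∈ t1 ∩ t2, u p
        = ∑ p ∈ t1, u p + ∑ p ∈ t2, u p := Finset.sum_union_inter
    have h3 : 0 ≤ ∑ p ∈ t1 ∩ t2, u p := by
      apply Finset.sum_nonneg
      intro p hp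
      exact (hmem p (Finset.filter_subset _ _ (Finset.mem_of_mem_inter_left hp))).1
    linarith
  -- compute diagonal sums
  have hT1 : ∑ p ∈ t1, u p = ∑ i ∈ I, (if i ∈ J then x i * z i else 0) := by
    rw [ht1, Finset.sum_filter, Finset.sum_product]
    congr 1; ext i
    exact Finset.sum_ite_eq' J i (fun j => x i * z j)
  have hT2 : ∑ p ∈ t2, u p
      = ∑ i ∈ I, (if π.symm i ∈ J then x i * z (π.symm i) else 0) := by
    rw [ht2, Finset.sum_filter, Finset.sum_product]
    congr 1; ext i
    exact Finset.sum_ite_eq' J (π.symm i) (fun j => x i * z j)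
  -- Cauchy-Schwarz bounds
  have hzsq : ∀ (F : Finset α), ∑ j ∈ F.filter (· ∈ J), (z j)^2 ≤ ∑ j ∈ J, (z j)^2 := by
    intro F
    apply Finset.sum_le_sum_of_subset_of_nonneg
    · intro j hj; exact (Finset.mem_filter.mp hj).2
    · intro j _ _; exact sq_nonneg _
  have key : ∀ g : α → α, Function.Injective g →
      ∑ i ∈ I, (if g i ∈ J then x i * z (g i) else 0) ≤ Real.sqrt B := by
    intro g hg
    set T : ℝ := ∑ i ∈ I, (if g i ∈ J then x i * z (g i) else 0) with hT
    have hTnonneg : 0 ≤ T := by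
      apply Finset.sum_nonneg
      intro i hi
      split
      · next h => exact mul_nonneg (hx _ hi).1 (hz _ h).1
      · exact le_refl _
    have hcs := Finset.sum_mul_sq_le_sq_mul_sq I (fun i => x i)
      (fun i => if g i ∈ J then z (g i) else 0)
    have hTeq : T = ∑ i ∈ I, x i * (if g i ∈ J then z (g i) else 0) := by
      rw [hT]; congr 1; ext i; split <;> simp
    have hg2 : ∑ i ∈ I, (if g i ∈ J then z (g i) else 0)^2
        ≤ ∑ j ∈ J, (z j)^2 := by
      have heq : ∀ i, (if g i ∈ J then z (g i) else 0)^2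
          = (fun j => if j ∈ J then (z j)^2 else 0) (g i) := by
        intro i; split <;> simp_all
      calc ∑ i ∈ I, (if g i ∈ J then z (g i) else 0)^2
          = ∑ i ∈ I, (fun j => if j ∈ J then (z j)^2 else 0) (g i) := by
            exact Finset.sum_congr rfl fun i _ => heq i
        _ = ∑ j ∈ I.image g, (if j ∈ J then (z j)^2 else 0) := by
            rw [Finset.sum_image fun a _ b _ h => hg h]
        _ = ∑ j ∈ (I.image g).filter (· ∈ J), (z j)^2 :=
            (Finset.sum_filter _ _).symm
        _ ≤ ∑ j ∈ J, (z j)^2 := hzsq _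
    have hT2B : T^2 ≤ B := by
      rw [hTeq]
      calc (∑ i ∈ I, x i * (if g i ∈ J then z (g i) else 0))^2
          ≤ (∑ i ∈ I, (x i)^2) * (∑ i ∈ I, (if g i ∈ J then z (g i) else 0)^2) := hcs
        _ ≤ B := by
            apply mul_le_mul_of_nonneg_left hg2
            exact Finset.sum_nonneg fun i _ => sq_nonneg _
    calc T = Real.sqrt (T^2) := (Real.sqrt_sq hTnonneg).symm
      _ ≤ Real.sqrt B := Real.sqrt_le_sqrt hT2B
  have hRle : R ≤ 2 * Real.sqrt B := by
    have h1 := key id Function.injective_id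
    have h2 := key π.symm π.symm.injective
    simp only [id] at h1
    rw [hT1] at hRle12
    rw [hT2] at hRle12
    linarith
  -- final arithmetic
  have hsqB : Real.sqrt B ^ 2 = B := Real.sq_sqrt hBnonneg
  have hsqrtnonneg : 0 ≤ Real.sqrt B := Real.sqrt_nonneg _
  have hSeq : ∑ p ∈ s, u p = (∑ i ∈ I, x i) * (∑ j ∈ J, z j) - R := by
    rw [← hA]; linarith
  have hQeq : ∑ p ∈ s, (u p)^2 = B - R' := by linarith
  rw [hSeq, hQeq]
  nlinarith [sq_nonneg (Real.sqrt B - 3)]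
end
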